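/- arXiv:2601.02134 — 4 statements merged into one kernel-verified Lean document; each statement's English description precedes it below -/
import Mathlib

section
/- For the constraint function c : ℝⁿ → ℝⁿ defined by c_i(x) = x_i(1 - x_i), whose Jacobian is J(x) = diag(1 - 2x_1, ..., 1 - 2x_n), for any R with 0 < R < 1/4 and any x ∈ ℝⁿ with ‖c(x)‖ ≤ R, one has ‖J(x)ᵀ c(x)‖ ≥ √(1 - 4R) · ‖c(x)‖. -/
/-- Binary constraints `c_i(x) = x_i (1 - x_i)` satisfy the PL condition:
if `‖c(x)‖ ≤ R < 1/4` then `‖J(x)ᵀ c(x)‖ ≥ √(1 - 4R) ‖c(x)‖`, where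
`J(x)ᵀ c(x)` has components `(1 - 2 x_i) c_i(x)`. -/
theorem stmt_0 (n : ℕ) (x : EuclideanSpace ℝ (Fin n)) (R : ℝ)
    (hR0 : 0 < R) (hR : R < 1 / 4)
    (c g : EuclideanSpace ℝ (Fin n))
    (hc : ∀ i, c i = x i * (1 - x i))
    (hg : ∀ i, g i = (1 - 2 * x i) * c i)
    (hcR : ‖c‖ ≤ R) :
    ‖g‖ ≥ Real.sqrt (1 - 4 * R) * ‖c‖ := by
  have hcsq : ‖c‖ ^ 2 = ∑ i, c i ^ 2 := by
    rw [EuclideanSpace.norm_eq, Real.sq_sqrt (by positivity)]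
    simp [Real.norm_eq_abs, sq_abs]
  have hgsq : ‖g‖ ^ 2 = ∑ i, g i ^ 2 := by
    rw [EuclideanSpace.norm_eq, Real.sq_sqrt (by positivity)]
    simp [Real.norm_eq_abs, sq_abs]
  have hci : ∀ i, c i ≤ R := by
    intro i
    have h1 : c i ^ 2 ≤ ‖c‖ ^ 2 := by
      rw [hcsq]
      exact Finset.single_le_sum (f := fun j => c j ^ 2) (fun j _ => sq_nonneg _)
        (Finset.mem_univ i)
    calc c i ≤ |c i| := le_abs_self _
      _ ≤ |‖c‖| := by
          rw [← Real.sqrt_sq_eq_abs, ← Real.sqrt_sq_eq_abs]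
          exact Real.sqrt_le_sqrt h1
      _ = ‖c‖ := abs_of_nonneg (norm_nonneg _)
      _ ≤ R := hcR
  have key : (1 - 4 * R) * ‖c‖ ^ 2 ≤ ‖g‖ ^ 2 := by
    rw [hcsq, hgsq, Finset.mul_sum]
    apply Finset.sum_le_sum
    intro i _
    have : g i ^ 2 = (1 - 4 * c i) * c i ^ 2 := by
      rw [hg i, hc i]; ring
    rw [this]
    apply mul_le_mul_of_nonneg_right _ (sq_nonneg _)
    linarith [hci i]
  have h14R : (0:ℝ) ≤ 1 - 4 * R := by linarith
  have := Real.sqrt_le_sqrt key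
  rwa [Real.sqrt_mul h14R, Real.sqrt_sq (norm_nonneg _), Real.sqrt_sq (norm_nonneg _)] at this
end

section
/- Let f : ℝⁿ → ℝ and c : ℝⁿ → ℝᵐ, f_low a lower bound of f, β > 0, and define Q_β(x) = f(x) + (β/2)‖c(x)‖². If points x₀ and y satisfy Q_β(y) ≤ Q_β(x₀) and ‖c(x₀)‖ ≤ ε₀/√2 with β ≥ 4(f(x₀) - f_low) ε₀⁻², then ‖c(y)‖ ≤ ε₀. -/
/-- If `Q_β(y) ≤ Q_β(x₀)`, `‖c(x₀)‖ ≤ ε₀/√2` and `β ≥ 4 (f(x₀) - f_low) ε₀⁻²`,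
then `‖c(y)‖ ≤ ε₀`. -/
theorem stmt_4 (n m : ℕ)
    (f : EuclideanSpace ℝ (Fin n) → ℝ)
    (c : EuclideanSpace ℝ (Fin n) → EuclideanSpace ℝ (Fin m))
    (flow : ℝ) (hflow : ∀ x, flow ≤ f x)
    (β ε₀ : ℝ) (hβ : 0 < β) (hε₀ : 0 < ε₀)
    (x₀ y : EuclideanSpace ℝ (Fin n))
    (hQ : f y + β / 2 * ‖c y‖ ^ 2 ≤ f x₀ + β / 2 * ‖c x₀‖ ^ 2)
    (hx₀ : ‖c x₀‖ ≤ ε₀ / Real.sqrt 2)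
    (hβbig : β ≥ 4 * (f x₀ - flow) * ε₀⁻¹ ^ 2) :
    ‖c y‖ ≤ ε₀ := by
  have h2 : Real.sqrt 2 ^ 2 = 2 := Real.sq_sqrt (by norm_num)
  have hs : (0:ℝ) < Real.sqrt 2 := Real.sqrt_pos.mpr (by norm_num)
  have hx2 : ‖c x₀‖ ^ 2 ≤ ε₀ ^ 2 / 2 := by
    have := sq_le_sq' (by linarith [norm_nonneg (c x₀), (div_pos hε₀ hs).le]) hx₀
    calc ‖c x₀‖ ^ 2 ≤ (ε₀ / Real.sqrt 2) ^ 2 := this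
      _ = ε₀ ^ 2 / 2 := by rw [div_pow, h2]
  have hfb : 4 * (f x₀ - flow) ≤ β * ε₀ ^ 2 := by
    have h := mul_le_mul_of_nonneg_right hβbig (sq_nonneg ε₀)
    have h1 : ε₀⁻¹ ^ 2 * ε₀ ^ 2 = 1 := by field_simp
    rw [mul_assoc, h1, mul_one] at h
    exact h
  have hy2 : ‖c y‖ ^ 2 ≤ ε₀ ^ 2 := by
    have hfy := hflow y
    nlinarith
  nlinarith [norm_nonneg (c y)]
end

section
/- Let f : ℝⁿ → ℝ with lower bound f_low, c : ℝⁿ → ℝᵐ, β ≥ 1, and Q_β(x) = f(x) + (β/2)‖c(x)‖². If ‖c(x₀)‖ ≤ ε₀/√2 and β < 4(f(x₀) - f_low) ε₀⁻², then any point y with Q_β(y) ≤ Q_β(x₀) satisfies f(y) ≤ 2 f(x₀) - f_low, i.e., y lies in the sublevel set L_f(2 f(x₀) - f_low). -/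
/-- If `‖c(x₀)‖ ≤ ε₀/√2`, `β < 4 (f(x₀) - f_low) ε₀⁻²` (with `β ≥ 1`), then any
`y` with `Q_β(y) ≤ Q_β(x₀)` satisfies `f(y) ≤ 2 f(x₀) - f_low`. -/
theorem stmt_5 (n m : ℕ)
    (f : EuclideanSpace ℝ (Fin n) → ℝ)
    (c : EuclideanSpace ℝ (Fin n) → EuclideanSpace ℝ (Fin m))
    (flow : ℝ) (hflow : ∀ x, flow ≤ f x)
    (β ε₀ : ℝ) (hβ : 1 ≤ β) (hε₀ : 0 < ε₀)
    (x₀ y : EuclideanSpace ℝ (Fin n))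
    (hx₀ : ‖c x₀‖ ≤ ε₀ / Real.sqrt 2)
    (hβsmall : β < 4 * (f x₀ - flow) * ε₀⁻¹ ^ 2)
    (hQ : f y + β / 2 * ‖c y‖ ^ 2 ≤ f x₀ + β / 2 * ‖c x₀‖ ^ 2) :
    f y ≤ 2 * f x₀ - flow := by
  have hβ0 : (0:ℝ) < β := lt_of_lt_of_le one_pos hβ
  have h1 : ‖c x₀‖ ^ 2 ≤ ε₀ ^ 2 / 2 := by
    have h2 : ‖c x₀‖ ^ 2 ≤ (ε₀ / Real.sqrt 2) ^ 2 :=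
      pow_le_pow_left₀ (norm_nonneg _) hx₀ 2
    have : (ε₀ / Real.sqrt 2) ^ 2 = ε₀ ^ 2 / 2 := by
      rw [div_pow, Real.sq_sqrt (by norm_num)]
    linarith
  have h3 : β * ε₀ ^ 2 < 4 * (f x₀ - flow) := by
    have := mul_lt_mul_of_pos_right hβsmall (pow_pos hε₀ 2)
    have hε2 : ε₀ ^ 2 ≠ 0 := ne_of_gt (pow_pos hε₀ 2)
    field_simp at this
    linarith
  have h4 : β / 2 * ‖c x₀‖ ^ 2 ≤ β * ε₀ ^ 2 / 4 := by nlinarith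
  have h5 : 0 ≤ β / 2 * ‖c y‖ ^ 2 := by positivity
  nlinarith
end

section
/- Let f : ℝⁿ → ℝ with lower bound f_low and c : ℝⁿ → ℝᵐ, ε₀ > 0, β₀ ≥ 1, α > 1, β_k = α^k β₀, and Q_β(x) = f(x) + (β/2)‖c(x)‖². Suppose x₀ satisfies ‖c(x₀)‖ ≤ ε₀/√2 and a sequence (x_k) satisfies Q_{β_k}(x_{k+1}) ≤ Q_{β_k}(x₀) for each k. If ‖c(x_k)‖ > ε₀ for k = 1,...,T-1 with T ≥ 2, then β_{T-2} < 4(f(x₀) - f_low) ε₀⁻². -/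
/-- Classical penalty-parameter bound without the PL condition: if the iterates
remain infeasible beyond tolerance `ε₀` for `k = 1,…,T-1`, then
`β_{T-2} = α^{T-2} β₀ < 4 (f(x₀) - f_low) ε₀⁻²`. -/
theorem stmt_11 (n m : ℕ)
    (f : EuclideanSpace ℝ (Fin n) → ℝ)
    (c : EuclideanSpace ℝ (Fin n) → EuclideanSpace ℝ (Fin m))
    (flow : ℝ) (hflow : ∀ x, flow ≤ f x)
    (ε₀ α β₀ : ℝ) (hε₀ : 0 < ε₀) (hα : 1 < α) (hβ₀ : 1 ≤ β₀)
    (x : ℕ → EuclideanSpace ℝ (Fin n))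
    (hx₀ : ‖c (x 0)‖ ≤ ε₀ / Real.sqrt 2)
    (hdec : ∀ k : ℕ,
      f (x (k + 1)) + α ^ k * β₀ / 2 * ‖c (x (k + 1))‖ ^ 2
        ≤ f (x 0) + α ^ k * β₀ / 2 * ‖c (x 0)‖ ^ 2)
    (T : ℕ) (hT : 2 ≤ T)
    (hinfeas : ∀ k : ℕ, 1 ≤ k → k ≤ T - 1 → ε₀ < ‖c (x k)‖) :
    α ^ (T - 2) * β₀ < 4 * (f (x 0) - flow) * ε₀⁻¹ ^ 2 := by
  have hk : T - 2 + 1 = T - 1 := by omega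
  have hd := hdec (T - 2)
  rw [hk] at hd
  have hinf := hinfeas (T - 1) (by omega) le_rfl
  have hβ : (1 : ℝ) ≤ α ^ (T - 2) * β₀ := by
    have h := one_le_pow₀ (n := T - 2) hα.le
    nlinarith
  have hx0sq : ‖c (x 0)‖ ^ 2 ≤ ε₀ ^ 2 / 2 := by
    have h2 : (0:ℝ) < Real.sqrt 2 := Real.sqrt_pos.mpr (by norm_num)
    have hn : (0:ℝ) ≤ ‖c (x 0)‖ := norm_nonneg _
    have hs := Real.sq_sqrt (by norm_num : (0:ℝ) ≤ 2)
    have hp := pow_le_pow_left₀ hn hx₀ 2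
    rw [div_pow, hs] at hp
    linarith
  have hflow' := hflow (x (T - 1))
  have hsq : ε₀ ^ 2 < ‖c (x (T - 1))‖ ^ 2 := by nlinarith
  have hinv : ε₀⁻¹ ^ 2 = (ε₀ ^ 2)⁻¹ := by rw [inv_pow]
  rw [hinv, mul_comm (4 * (f (x 0) - flow)), ← div_eq_inv_mul, lt_div_iff₀ (by positivity : (0:ℝ) < ε₀ ^ 2)]
  nlinarith
end
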